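/- There exists a locally strict Sorgenfrey base for the Sorgenfrey line 𝕊 that has strict branches. -/

import Mathlib

open Set Filter Topology TopologicalSpace Function

noncomputable section

/-- The Sorgenfrey topology on `ℝ`: generated by half-open intervals `[a, b)`. -/
def sorgenfreyTop : TopologicalSpace ℝ :=
  TopologicalSpace.generateFrom {s : Set ℝ | ∃ a b : ℝ, s = Set.Ico a b}

/-- The initial segment `p↾n` of an infinite sequence, as a list. -/
def restr (p : ℕ → ℕ) (n : ℕ) : List ℕ := (List.range n).map p

/-- `fruit V p = ⋂ n, V (p↾n)`. -/
def fruit {X : Type*} (V : List ℕ → Set X) (p : ℕ → ℕ) : Set X := ⋂ n, V (restr p n)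

/-- A Souslin scheme is covering if `V ⟨⟩ = X` and `V a = ⋃ n, V (a ⌢ n)`. -/
def Covering {X : Type*} (V : List ℕ → Set X) : Prop :=
  V [] = Set.univ ∧ ∀ a : List ℕ, V a = ⋃ n : ℕ, V (a ++ [n])

/-- A Souslin scheme is complete if every fruit is nonempty. -/
def CompleteScheme {X : Type*} (V : List ℕ → Set X) : Prop :=
  ∀ q : ℕ → ℕ, (fruit V q).Nonempty

/-- A Souslin scheme has strict branches if every fruit is a singleton. -/
def StrictBranches {X : Type*} (V : List ℕ → Set X) : Prop :=
  ∀ q : ℕ → ℕ, ∃ x : X, fruit V q = {x}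

/-- A Souslin scheme is locally strict. -/
def LocallyStrict {X : Type*} (V : List ℕ → Set X) : Prop :=
  (∀ a : List ℕ, V a = ⋃ n : ℕ, V (a ++ [n])) ∧
  ∀ a : List ℕ, ∀ m k : ℕ, m ≠ k → V (a ++ [m]) ∩ V (a ++ [k]) = ∅

/-- `q ◁ p` for infinite sequences: `q↾n = p↾n` and `q n < p n` for some `n`. -/
def tri (q p : ℕ → ℕ) : Prop := ∃ n : ℕ, restr q n = restr p n ∧ q n < p n

/-- `q ⊴ p` for infinite sequences. -/
def trieq (q p : ℕ → ℕ) : Prop := tri q p ∨ q = p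

/-- `q ◁ s` where `q` is an infinite sequence and `s` a finite one. -/
def triL (q : ℕ → ℕ) (s : List ℕ) : Prop :=
  ∃ n : ℕ, ∃ h : n < s.length, restr q n = s.take n ∧ q n < s.get ⟨n, h⟩

/-- `rsequences(q, n) = {p | q ◁ p ∧ q↾n = p↾n}`. -/
def rsequences (q : ℕ → ℕ) (n : ℕ) : Set (ℕ → ℕ) :=
  {p | tri q p ∧ restr q n = restr p n}

/-- `rsubtree(q, n)`: finite sequences `s` such that `q↾n ⊏ s` and `q ◁ s`. -/
def rsubtree (q : ℕ → ℕ) (n : ℕ) : Set (List ℕ) :=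
  {s | restr q n <+: s ∧ restr q n ≠ s ∧ triL q s}

/-- `cut(V, q, n) = ⋃ {fruit(V, p) : p ∈ rsequences(q, n)}`. -/
def cut {X : Type*} (V : List ℕ → Set X) (q : ℕ → ℕ) (n : ℕ) : Set X :=
  ⋃ p ∈ rsequences q n, fruit V p

/-- `branches(V, x) = {q | x ∈ fruit(V, q)}`. -/
def branches {X : Type*} (V : List ℕ → Set X) (x : X) : Set (ℕ → ℕ) :=
  {q | x ∈ fruit V q}

/-- `q` is a `τ`-base branch of `x` in `V`: `q ∈ branches(V, x)` and
`{cut(V, q, m) ∪ {x} : m ∈ ℕ}` is a neighborhood base of open sets at `x`. -/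
def IsBaseBranch {X : Type*} (τ : TopologicalSpace X) (V : List ℕ → Set X)
    (q : ℕ → ℕ) (x : X) : Prop :=
  x ∈ fruit V q ∧ (∀ m : ℕ, IsOpen[τ] (cut V q m ∪ {x})) ∧
    (@nhds X τ x).HasBasis (fun _ : ℕ => True) (fun m : ℕ => cut V q m ∪ {x})

/-- `BB(V, x, τ)`: the set of `τ`-base branches of `x` in `V`. -/
def BB {X : Type*} (τ : TopologicalSpace X) (V : List ℕ → Set X) (x : X) : Set (ℕ → ℕ) :=
  {q | IsBaseBranch τ V q x}

/-- A Sorgenfrey base for a space: an open complete covering Souslin scheme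
satisfying (S1) and (S2). -/
def IsSorgenfreyBase {X : Type*} (τ : TopologicalSpace X) (V : List ℕ → Set X) : Prop :=
  (∀ a : List ℕ, IsOpen[τ] (V a)) ∧ CompleteScheme V ∧ Covering V ∧
  (∀ x : X, ∀ q ∈ branches V x, ∀ n : ℕ, ∃ t ∈ BB τ V x, restr t n = restr q n) ∧
  (∀ q : ℕ → ℕ, ∃ z : X, q ∈ BB τ V z)

/-- The Souslin scheme `S` on the Baire set: `S a = {p | a ⊑ p}`. -/
def SchemeS (a : List ℕ) : Set (ℕ → ℕ) := {p | restr p a.length = a}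

/-- The topology `σ_𝕊` on `ℕ → ℕ` generated by the base
`{cut(S, p, n) ∪ {p} : p ∈ ℕ → ℕ, n ∈ ℕ}`. -/
def sigmaS : TopologicalSpace (ℕ → ℕ) :=
  TopologicalSpace.generateFrom
    {U : Set (ℕ → ℕ) | ∃ p : ℕ → ℕ, ∃ n : ℕ, U = cut SchemeS p n ∪ {p}}
namespace S7

/-! ### sequence restriction lemmas -/

lemma restr_zero (p : ℕ → ℕ) : restr p 0 = [] := rfl

lemma restr_succ (p : ℕ → ℕ) (n : ℕ) : restr p (n+1) = restr p n ++ [p n] := by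
  simp [restr, List.range_succ]

lemma restr_length (p : ℕ → ℕ) (n : ℕ) : (restr p n).length = n := by
  simp [restr]

lemma restr_eq_imp {p q : ℕ → ℕ} {n : ℕ} (h : restr p n = restr q n) :
    ∀ i, i < n → p i = q i := by
  intro i hi
  have h2 := congrArg (fun l : List ℕ => l[i]?) h
  simpa [restr, List.getElem?_map, List.getElem?_range, hi] using h2

lemma restr_eq_of {p q : ℕ → ℕ} {n : ℕ} (h : ∀ i, i < n → p i = q i) :
    restr p n = restr q n := by
  unfold restr
  exact List.map_congr_left (fun a ha => h a (List.mem_range.1 ha))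

lemma restr_eq_list {p : ℕ → ℕ} {a : List ℕ}
    (h : ∀ i (hi : i < a.length), p i = a.get ⟨i, hi⟩) : restr p a.length = a := by
  apply List.ext_getElem
  · simp [restr]
  · intro i h1 h2
    simp only [restr, List.getElem_map, List.getElem_range]
    exact h i h2

/-! ### the enumeration of ℤ and the dyadic split points -/

def ee : ℕ → ℤ := (Denumerable.eqv ℤ).symm

lemma ee_inj : Function.Injective ee := (Denumerable.eqv ℤ).symm.injective

lemma ee_surj : Function.Surjective ee := (Denumerable.eqv ℤ).symm.surjective

def ff (n : ℕ) : ℝ := 1 - (2:ℝ)⁻¹ ^ n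

lemma ff_zero : ff 0 = 0 := by simp [ff]

lemma ff_lt_one (n : ℕ) : ff n < 1 := by
  have : (0:ℝ) < (2:ℝ)⁻¹ ^ n := by positivity
  simp only [ff]; linarith

lemma ff_nonneg (n : ℕ) : 0 ≤ ff n := by
  have : (2:ℝ)⁻¹ ^ n ≤ 1 := pow_le_one₀ (by norm_num) (by norm_num)
  simp only [ff]; linarith

lemma ff_strictMono : StrictMono ff := by
  intro m n h
  have : (2:ℝ)⁻¹ ^ n < (2:ℝ)⁻¹ ^ m :=
    pow_lt_pow_right_of_lt_one₀ (by norm_num) (by norm_num) h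
  simp only [ff]; linarith

lemma ff_mono : Monotone ff := ff_strictMono.monotone

/-! ### the interval scheme (on reversed lists) -/

def ival : List ℕ → ℝ × ℝ
  | [] => (0, 1)
  | [n] => ((ee n : ℝ), (ee n : ℝ) + 1)
  | n :: b :: rest =>
      let p := ival (b :: rest)
      (p.1 + (p.2 - p.1) * ff n, p.1 + (p.2 - p.1) * ff (n+1))

lemma ival_single (n : ℕ) : ival [n] = ((ee n : ℝ), (ee n : ℝ) + 1) := rfl

lemma ival_cons (n : ℕ) (c : List ℕ) (hc : c ≠ []) :
    ival (n :: c) = ((ival c).1 + ((ival c).2 - (ival c).1) * ff n,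
      (ival c).1 + ((ival c).2 - (ival c).1) * ff (n+1)) := by
  match c with
  | [] => exact absurd rfl hc
  | b :: rest => rfl

lemma ival_lt : ∀ (c : List ℕ), c ≠ [] → (ival c).1 < (ival c).2
  | [], h => absurd rfl h
  | [n], _ => by simp [ival_single]
  | n :: b :: rest, _ => by
      have ih := ival_lt (b :: rest) (by simp)
      rw [ival_cons n (b :: rest) (by simp)]
      have hd : 0 < (ival (b::rest)).2 - (ival (b::rest)).1 := sub_pos.2 ih
      have hf : ff n < ff (n+1) := ff_strictMono (Nat.lt_succ_self n)
      dsimp only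
      nlinarith

lemma ival_child_left {c : List ℕ} (hc : c ≠ []) (n : ℕ) :
    (ival c).1 ≤ (ival (n :: c)).1 := by
  rw [ival_cons n c hc]
  have hd : 0 < (ival c).2 - (ival c).1 := sub_pos.2 (ival_lt c hc)
  have := ff_nonneg n
  dsimp only; nlinarith

lemma ival_child_right {c : List ℕ} (hc : c ≠ []) (n : ℕ) :
    (ival (n :: c)).2 < (ival c).2 := by
  rw [ival_cons n c hc]
  have hd : 0 < (ival c).2 - (ival c).1 := sub_pos.2 (ival_lt c hc)
  have := ff_lt_one (n+1)
  dsimp only; nlinarith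

lemma ival_order {c : List ℕ} (hc : c ≠ []) {m k : ℕ} (h : m < k) :
    (ival (m :: c)).2 ≤ (ival (k :: c)).1 := by
  rw [ival_cons m c hc, ival_cons k c hc]
  have hd : 0 < (ival c).2 - (ival c).1 := sub_pos.2 (ival_lt c hc)
  have hf : ff (m+1) ≤ ff k := ff_mono h
  dsimp only; nlinarith

lemma ival_diff : ∀ (c : List ℕ), c ≠ [] → (ival c).2 - (ival c).1 ≤ 2 * (2:ℝ)⁻¹ ^ c.length
  | [], h => absurd rfl h
  | [n], _ => by simp [ival_single]
  | n :: b :: rest, _ => by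
      have ih := ival_diff (b :: rest) (by simp)
      rw [ival_cons n (b :: rest) (by simp)]
      have hd : 0 < (ival (b::rest)).2 - (ival (b::rest)).1 :=
        sub_pos.2 (ival_lt (b::rest) (by simp))
      have key : ff (n+1) - ff n ≤ (2:ℝ)⁻¹ := by
        simp only [ff]
        have h1 : (2:ℝ)⁻¹ ^ n ≤ 1 := pow_le_one₀ (by norm_num) (by norm_num)
        have : (2:ℝ)⁻¹ ^ (n+1) = (2:ℝ)⁻¹ ^ n * 2⁻¹ := pow_succ _ _
        nlinarith
      have hlen : ((n :: b :: rest).length : ℕ) = (b :: rest).length + 1 := by simp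
      rw [hlen, pow_succ]
      dsimp only
      nlinarith

/-- Cover: each nonempty-node interval is the union of its children. -/
lemma ival_cover {c : List ℕ} (hc : c ≠ []) {y : ℝ}
    (hy : y ∈ Set.Ico (ival c).1 (ival c).2) :
    ∃ n, y ∈ Set.Ico (ival (n :: c)).1 (ival (n :: c)).2 := by
  obtain ⟨hy1, hy2⟩ := hy
  set l := (ival c).1
  set r := (ival c).2
  have hd : 0 < r - l := sub_pos.2 (ival_lt c hc)
  set t : ℝ := (y - l) / (r - l) with ht
  have ht0 : 0 ≤ t := div_nonneg (by linarith) (by linarith)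
  have ht1 : t < 1 := (div_lt_one hd).2 (by linarith)
  -- find n with ff n ≤ t < ff (n+1), i.e. 2⁻¹^(n+1) < 1 - t ≤ 2⁻¹^n
  have hpos : (0:ℝ) < 1 - t := by linarith
  have hex : ∃ n, (2:ℝ)⁻¹ ^ n < 1 - t := exists_pow_lt_of_lt_one hpos (by norm_num)
  classical
  have hNs : (2:ℝ)⁻¹ ^ (Nat.find hex) < 1 - t := Nat.find_spec hex
  have hN1 : Nat.find hex ≠ 0 := by
    intro h0
    rw [h0, pow_zero] at hNs; linarith
  obtain ⟨m, hm⟩ : ∃ m, Nat.find hex = m + 1 := Nat.exists_eq_succ_of_ne_zero hN1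
  rw [hm] at hNs
  have hge : 1 - t ≤ (2:ℝ)⁻¹ ^ m := by
    by_contra h
    push_neg at h
    exact (Nat.find_min hex (by omega)) h
  have hty : t * (r - l) = y - l := div_mul_cancel₀ _ (ne_of_gt hd)
  refine ⟨m, ?_, ?_⟩
  · rw [ival_cons m c hc]; dsimp only
    have hfm : ff m ≤ t := by simp only [ff]; linarith
    nlinarith
  · rw [ival_cons m c hc]; dsimp only
    have hfm : t < ff (m+1) := by simp only [ff]; linarith
    nlinarith

/-! ### the Souslin scheme on ℝ -/

def Vs (a : List ℕ) : Set ℝ :=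
  if a = [] then Set.univ else Set.Ico (ival a.reverse).1 (ival a.reverse).2

lemma Vs_nil : Vs [] = Set.univ := rfl

lemma Vs_ne {a : List ℕ} (ha : a ≠ []) :
    Vs a = Set.Ico (ival a.reverse).1 (ival a.reverse).2 := by
  simp [Vs, ha]

lemma Vs_append (a : List ℕ) (n : ℕ) :
    Vs (a ++ [n]) = Set.Ico (ival (n :: a.reverse)).1 (ival (n :: a.reverse)).2 := by
  rw [Vs_ne (by simp)]
  simp

lemma Vs_single (n : ℕ) : Vs [n] = Set.Ico ((ee n : ℝ)) ((ee n : ℝ) + 1) := by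
  rw [Vs_ne (by simp)]
  simp [ival_single]

/-- every point is in some root interval -/
lemma Vs_root_cover (y : ℝ) : ∃ n, y ∈ Vs [n] := by
  obtain ⟨n, hn⟩ := ee_surj ⌊y⌋
  refine ⟨n, ?_⟩
  rw [Vs_single, hn]
  constructor
  · exact Int.floor_le y
  · have := Int.lt_floor_add_one y
    linarith [Int.lt_floor_add_one y]

lemma Vs_child_subset (a : List ℕ) (n : ℕ) : Vs (a ++ [n]) ⊆ Vs a := by
  rcases eq_or_ne a [] with rfl | ha
  · simp [Vs_nil]
  · rw [Vs_append, Vs_ne ha]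
    have hrev : a.reverse ≠ [] := by simpa using ha
    intro y hy
    exact ⟨le_trans (ival_child_left hrev n) hy.1,
      lt_trans hy.2 (ival_child_right hrev n)⟩

lemma Vs_cover (a : List ℕ) : Vs a = ⋃ n, Vs (a ++ [n]) := by
  apply Set.Subset.antisymm
  · intro y hy
    rcases eq_or_ne a [] with rfl | ha
    · obtain ⟨n, hn⟩ := Vs_root_cover y
      exact Set.mem_iUnion.2 ⟨n, by simpa using hn⟩
    · rw [Vs_ne ha] at hy
      have hrev : a.reverse ≠ [] := by simpa using ha
      obtain ⟨n, hn⟩ := ival_cover hrev hy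
      exact Set.mem_iUnion.2 ⟨n, by rw [Vs_append]; exact hn⟩
  · exact Set.iUnion_subset fun n => Vs_child_subset a n

/-- children order: points in earlier children are smaller (nonroot nodes) -/
lemma Vs_order {a : List ℕ} (ha : a ≠ []) {m k : ℕ} (h : m < k)
    {y z : ℝ} (hy : y ∈ Vs (a ++ [m])) (hz : z ∈ Vs (a ++ [k])) : y < z := by
  rw [Vs_append] at hy hz
  have hrev : a.reverse ≠ [] := by simpa using ha
  exact lt_of_lt_of_le hy.2 (le_trans (ival_order hrev h) hz.1)

lemma Vs_disjoint (a : List ℕ) {m k : ℕ} (h : m ≠ k) :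
    Vs (a ++ [m]) ∩ Vs (a ++ [k]) = ∅ := by
  rcases eq_or_ne a [] with rfl | ha
  · simp only [List.nil_append]
    rw [Vs_single, Vs_single]
    ext y
    simp only [Set.mem_inter_iff, Set.mem_Ico, Set.mem_empty_iff_false, iff_false]
    rintro ⟨⟨h1, h2⟩, ⟨h3, h4⟩⟩
    have hne : ee m ≠ ee k := fun hc => h (ee_inj hc)
    rcases lt_or_gt_of_ne hne with hl | hl
    · have : (ee m : ℝ) + 1 ≤ (ee k : ℝ) := by exact_mod_cast Int.add_one_le_iff.2 hl
      linarith
    · have : (ee k : ℝ) + 1 ≤ (ee m : ℝ) := by exact_mod_cast Int.add_one_le_iff.2 hl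
      linarith
  · ext y
    simp only [Set.mem_inter_iff, Set.mem_empty_iff_false, iff_false]
    rintro ⟨h1, h2⟩
    rcases lt_or_gt_of_ne h with hl | hl
    · exact lt_irrefl y (Vs_order ha hl h1 h2)
    · exact lt_irrefl y (Vs_order ha hl h2 h1)

lemma Vs_prefix_subset (a b : List ℕ) : Vs (a ++ b) ⊆ Vs a := by
  induction b using List.reverseRecOn with
  | nil => simp
  | append_singleton c n ih =>
      calc Vs (a ++ (c ++ [n])) = Vs ((a ++ c) ++ [n]) := by rw [List.append_assoc]
      _ ⊆ Vs (a ++ c) := Vs_child_subset _ _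
      _ ⊆ Vs a := ih

lemma Vs_take_subset (a : List ℕ) (n : ℕ) : Vs a ⊆ Vs (a.take n) := by
  conv_lhs => rw [← List.take_append_drop n a]
  exact Vs_prefix_subset _ _

/-! ### branches and their fruit -/

def LL (q : ℕ → ℕ) (n : ℕ) : ℝ := (ival (restr q n).reverse).1
def RR (q : ℕ → ℕ) (n : ℕ) : ℝ := (ival (restr q n).reverse).2

lemma restr_ne (q : ℕ → ℕ) (n : ℕ) : restr q (n+1) ≠ [] := by
  intro h
  have := restr_length q (n+1)
  rw [h] at this
  simp at this

lemma restr_rev_ne (q : ℕ → ℕ) (n : ℕ) : (restr q (n+1)).reverse ≠ [] := by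
  simpa using restr_ne q n

lemma Vs_restr (q : ℕ → ℕ) (n : ℕ) :
    Vs (restr q (n+1)) = Set.Ico (LL q (n+1)) (RR q (n+1)) :=
  Vs_ne (restr_ne q n)

lemma LL_lt_RR (q : ℕ → ℕ) (n : ℕ) : LL q (n+1) < RR q (n+1) :=
  ival_lt _ (restr_rev_ne q n)

lemma restr_rev_succ (q : ℕ → ℕ) (n : ℕ) :
    (restr q (n+1)).reverse = q n :: (restr q n).reverse := by
  rw [restr_succ]; simp

lemma LL_step (q : ℕ → ℕ) (n : ℕ) : LL q (n+1) ≤ LL q (n+2) := by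
  unfold LL
  rw [restr_rev_succ q (n+1)]
  exact ival_child_left (restr_rev_ne q n) _

lemma RR_step (q : ℕ → ℕ) (n : ℕ) : RR q (n+2) < RR q (n+1) := by
  unfold RR
  rw [restr_rev_succ q (n+1)]
  exact ival_child_right (restr_rev_ne q n) _

lemma LL_mono (q : ℕ → ℕ) : Monotone (fun n => LL q (n+1)) :=
  monotone_nat_of_le_succ (fun n => LL_step q n)

lemma RR_anti (q : ℕ → ℕ) : StrictAnti (fun n => RR q (n+1)) :=
  strictAnti_nat_of_succ_lt (fun n => RR_step q n)

lemma LL_le_RR (q : ℕ → ℕ) (m n : ℕ) : LL q (m+1) ≤ RR q (n+1) := by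
  rcases le_total m n with h | h
  · exact le_trans (LL_mono q h) (le_of_lt (LL_lt_RR q n))
  · exact le_trans (le_of_lt (LL_lt_RR q m)) (RR_anti q |>.antitone h)

lemma RR_diff (q : ℕ → ℕ) (n : ℕ) :
    RR q (n+1) - LL q (n+1) ≤ 2 * (2:ℝ)⁻¹ ^ (n+1) := by
  have := ival_diff _ (restr_rev_ne q n)
  rwa [List.length_reverse, restr_length] at this

/-- the unique point of the fruit of `q` -/
def xq (q : ℕ → ℕ) : ℝ := ⨆ n, LL q (n+1)

lemma xq_bdd (q : ℕ → ℕ) : BddAbove (Set.range fun n => LL q (n+1)) := by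
  refine ⟨RR q 1, ?_⟩
  rintro _ ⟨m, rfl⟩
  exact LL_le_RR q m 0

lemma LL_le_xq (q : ℕ → ℕ) (n : ℕ) : LL q (n+1) ≤ xq q :=
  le_ciSup (xq_bdd q) n

lemma xq_lt_RR (q : ℕ → ℕ) (n : ℕ) : xq q < RR q (n+1) := by
  have h1 : xq q ≤ RR q (n+2) := ciSup_le fun m => LL_le_RR q m (n+1)
  exact lt_of_le_of_lt h1 (RR_step q n)

lemma xq_mem_fruit (q : ℕ → ℕ) : xq q ∈ fruit Vs q := by
  refine Set.mem_iInter.2 fun n => ?_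
  cases n with
  | zero => simp [restr_zero, Vs_nil]
  | succ m =>
      rw [Vs_restr]
      exact ⟨LL_le_xq q m, xq_lt_RR q m⟩

lemma fruit_subset (q : ℕ → ℕ) {y : ℝ} (hy : y ∈ fruit Vs q) : y = xq q := by
  by_contra hne
  have habs : 0 < |y - xq q| := abs_pos.2 (sub_ne_zero.2 hne)
  obtain ⟨n, hn⟩ := exists_pow_lt_of_lt_one (x := |y - xq q| / 2) (y := (2:ℝ)⁻¹)
    (by linarith) (by norm_num)
  have hy' : y ∈ Set.Ico (LL q (n+1)) (RR q (n+1)) := by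
    rw [← Vs_restr]
    exact Set.mem_iInter.1 hy (n+1)
  have hx' : LL q (n+1) ≤ xq q := LL_le_xq q n
  have hx2 : xq q < RR q (n+1) := xq_lt_RR q n
  have hd := RR_diff q n
  have habs2 : |y - xq q| ≤ RR q (n+1) - LL q (n+1) := by
    rw [abs_sub_le_iff]
    constructor <;> [linarith [hy'.1, hy'.2]; linarith [hy'.1, hy'.2]]
  have : (2:ℝ)⁻¹ ^ (n+1) ≤ (2:ℝ)⁻¹ ^ n :=
    pow_le_pow_of_le_one (by norm_num) (by norm_num) (Nat.le_succ n)
  nlinarith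

lemma fruit_eq (q : ℕ → ℕ) : fruit Vs q = {xq q} := by
  apply Set.Subset.antisymm
  · intro y hy
    exact fruit_subset q hy
  · intro y hy
    rw [Set.mem_singleton_iff] at hy
    rw [hy]
    exact xq_mem_fruit q

/-! ### the branch through a point below a node -/

open Classical in
noncomputable def pick (y : ℝ) (a : List ℕ) : ℕ :=
  if h : ∃ n, y ∈ Vs (a ++ [n]) then h.choose else 0

lemma pick_spec {y : ℝ} {a : List ℕ} (hy : y ∈ Vs a) : y ∈ Vs (a ++ [pick y a]) := by
  have hex : ∃ n, y ∈ Vs (a ++ [n]) := by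
    have := (Vs_cover a) ▸ hy
    exact Set.mem_iUnion.1 this
  rw [pick, dif_pos hex]
  exact hex.choose_spec

noncomputable def extSeq (y : ℝ) (a : List ℕ) : ℕ → List ℕ
  | 0 => a
  | k+1 => extSeq y a k ++ [pick y (extSeq y a k)]

lemma extSeq_mem {y : ℝ} {a : List ℕ} (hy : y ∈ Vs a) (k : ℕ) :
    y ∈ Vs (extSeq y a k) := by
  induction k with
  | zero => exact hy
  | succ m ih => exact pick_spec ih

lemma extSeq_length (y : ℝ) (a : List ℕ) (k : ℕ) :
    (extSeq y a k).length = a.length + k := by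
  induction k with
  | zero => rfl
  | succ m ih => simp [extSeq, ih]; omega

noncomputable def thr (y : ℝ) (a : List ℕ) : ℕ → ℕ := fun i =>
  if h : i < a.length then a.get ⟨i, h⟩ else pick y (extSeq y a (i - a.length))

lemma restr_thr_base (y : ℝ) (a : List ℕ) : restr (thr y a) a.length = a := by
  apply restr_eq_list
  intro i hi
  simp [thr, hi]

lemma restr_thr (y : ℝ) (a : List ℕ) (k : ℕ) :
    restr (thr y a) (a.length + k) = extSeq y a k := by
  induction k with
  | zero => exact restr_thr_base y a
  | succ m ih =>
      have : a.length + (m+1) = (a.length + m) + 1 := rfl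
      rw [this, restr_succ, ih]
      have hth : thr y a (a.length + m) = pick y (extSeq y a m) := by
        have : ¬ (a.length + m < a.length) := by omega
        simp [thr, this]
      rw [hth]
      rfl

lemma thr_mem_fruit {y : ℝ} {a : List ℕ} (hy : y ∈ Vs a) : y ∈ fruit Vs (thr y a) := by
  refine Set.mem_iInter.2 fun n => ?_
  rcases le_or_gt n a.length with h | h
  · have hlen : (a.take n).length = n := by simp [h]
    have h1 : restr (thr y a) n = a.take n := by
      have h2 := restr_eq_list (p := thr y a) (a := a.take n) ?_
      · rwa [hlen] at h2
      · intro i hi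
        have hi' : i < a.length := lt_of_lt_of_le (by omega : i < n) h
        simp [thr, hi', List.get_eq_getElem, List.getElem_take]
    rw [h1]
    exact Vs_take_subset a n hy
  · obtain ⟨k, hk⟩ : ∃ k, n = a.length + k := ⟨n - a.length, by omega⟩
    rw [hk, restr_thr]
    exact extSeq_mem hy k

/-! ### order of branches vs order of points -/

lemma lt_of_branch_lt {q p : ℕ → ℕ} {n : ℕ} (hn : 1 ≤ n)
    (hr : restr q n = restr p n) (hlt : q n < p n) {x y : ℝ}
    (hx : x ∈ Vs (restr q (n+1))) (hy : y ∈ Vs (restr p (n+1))) : x < y := by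
  obtain ⟨n', rfl⟩ : ∃ k, n = k+1 := ⟨n-1, by omega⟩
  rw [restr_succ] at hx hy
  rw [← hr] at hy
  exact Vs_order (restr_ne q n') hlt hx hy

lemma xq_lt_of_tri {q p : ℕ → ℕ} {n : ℕ} (hn : 1 ≤ n)
    (hr : restr q n = restr p n) (hlt : q n < p n) : xq q < xq p :=
  lt_of_branch_lt hn hr hlt
    (Set.mem_iInter.1 (xq_mem_fruit q) (n+1))
    (Set.mem_iInter.1 (xq_mem_fruit p) (n+1))

/-! ### computation of the cuts -/

lemma cut_succ (q : ℕ → ℕ) (m : ℕ) :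
    cut Vs q (m+1) = Set.Ioo (xq q) (RR q (m+1)) := by
  ext y
  simp only [cut, rsequences, Set.mem_iUnion, Set.mem_setOf_eq, Set.mem_Ioo, exists_prop]
  constructor
  · rintro ⟨p, ⟨⟨n, hr, hlt⟩, hre⟩, hy⟩
    have hn : m+1 ≤ n := by
      by_contra h
      push_neg at h
      exact absurd (restr_eq_imp hre n h) (ne_of_lt hlt)
    have hxlt : xq q < y := by
      have := xq_lt_of_tri (by omega : 1 ≤ n) hr hlt
      rwa [← fruit_subset p hy] at this
    refine ⟨hxlt, ?_⟩
    have hy2 : y ∈ Vs (restr p (m+1)) := Set.mem_iInter.1 hy (m+1)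
    rw [← hre, Vs_restr] at hy2
    exact hy2.2
  · rintro ⟨hxy, hyR⟩
    have hyV : y ∈ Vs (restr q (m+1)) := by
      rw [Vs_restr]
      exact ⟨le_trans (LL_le_xq q m) hxy.le, hyR⟩
    set a := restr q (m+1) with ha
    have halen : a.length = m+1 := restr_length q (m+1)
    set p := thr y a with hp
    have hfr : y ∈ fruit Vs p := thr_mem_fruit hyV
    have hres : restr p (m+1) = restr q (m+1) := by
      have := restr_thr_base y a
      rwa [halen] at this
    have hne : p ≠ q := by
      intro h
      rw [h] at hfr
      exact ne_of_gt hxy (fruit_subset q hfr)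
    have hex : ∃ i, p i ≠ q i := Function.ne_iff.1 hne
    have hpn : p (Nat.find hex) ≠ q (Nat.find hex) := Nat.find_spec hex
    have hlow : ∀ i, i < Nat.find hex → p i = q i :=
      fun i hi => not_not.1 (Nat.find_min hex hi)
    have hrn : restr q (Nat.find hex) = restr p (Nat.find hex) :=
      (restr_eq_of hlow).symm
    have hn1 : m+1 ≤ Nat.find hex := by
      by_contra h
      push_neg at h
      exact hpn (restr_eq_imp hres (Nat.find hex) h)
    have hqp : q (Nat.find hex) < p (Nat.find hex) := by
      rcases lt_or_gt_of_ne hpn with h | h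
      · exfalso
        have hylt : y < xq q := by
          have := lt_of_branch_lt (n := Nat.find hex) (by omega) hrn.symm h
            (Set.mem_iInter.1 hfr (Nat.find hex + 1))
            (Set.mem_iInter.1 (xq_mem_fruit q) (Nat.find hex + 1))
          exact this
        linarith
      · exact h
    exact ⟨p, ⟨⟨Nat.find hex, hrn, hqp⟩, hres.symm⟩, hfr⟩

lemma cut_zero (q : ℕ → ℕ) :
    cut Vs q 0 = Set.Ioo (xq q) (RR q 1) ∪ ⋃ c, ⋃ (_ : q 0 < c), Vs [c] := by
  apply Set.Subset.antisymm
  · rintro y hy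
    simp only [cut, rsequences, Set.mem_iUnion, Set.mem_setOf_eq, exists_prop] at hy
    obtain ⟨p, ⟨⟨n, hr, hlt⟩, -⟩, hy⟩ := hy
    rcases eq_or_ne (p 0) (q 0) with h0 | h0
    · -- p agrees with q at 0: belongs to cut q 1
      left
      rw [← cut_succ q 0]
      simp only [cut, rsequences, Set.mem_iUnion, Set.mem_setOf_eq, exists_prop]
      refine ⟨p, ⟨⟨n, hr, hlt⟩, ?_⟩, hy⟩
      refine restr_eq_of (fun i hi => ?_)
      have : i = 0 := by omega
      rw [this]
      exact h0.symm
    · -- disagreement at 0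
      right
      have hn0 : n = 0 := by
        by_contra h
        exact h0 (restr_eq_imp hr.symm 0 (by omega))
      rw [hn0] at hlt
      have hy1 : y ∈ Vs (restr p 1) := Set.mem_iInter.1 hy 1
      have : restr p 1 = [p 0] := by rw [restr_succ, restr_zero]; rfl
      rw [this] at hy1
      exact Set.mem_iUnion.2 ⟨p 0, Set.mem_iUnion.2 ⟨hlt, hy1⟩⟩
  · rintro y (hy | hy)
    · rw [← cut_succ q 0] at hy
      simp only [cut, rsequences, Set.mem_iUnion, Set.mem_setOf_eq, exists_prop] at hy ⊢
      obtain ⟨p, ⟨ht, -⟩, hy⟩ := hy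
      exact ⟨p, ⟨ht, rfl⟩, hy⟩
    · obtain ⟨c, hc, hy⟩ := by
        simpa only [Set.mem_iUnion, exists_prop] using hy
      set p := thr y [c] with hp
      have hfr : y ∈ fruit Vs p := thr_mem_fruit hy
      have hres : restr p 1 = [c] := restr_thr_base y [c]
      have hp0 : p 0 = c := by
        have := restr_eq_imp (q := fun _ => c) (n := 1) (by
          rw [hres]; rfl) 0 (by omega)
        exact this
      simp only [cut, rsequences, Set.mem_iUnion, Set.mem_setOf_eq, exists_prop]
      exact ⟨p, ⟨⟨0, rfl, by rw [hp0]; exact hc⟩, rfl⟩, hfr⟩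

/-! ### the Sorgenfrey topology -/

lemma sOpen_iff {s : Set ℝ} :
    IsOpen[sorgenfreyTop] s ↔
      TopologicalSpace.GenerateOpen {s : Set ℝ | ∃ a b : ℝ, s = Set.Ico a b} s :=
  Iff.rfl

lemma sOpen_Ico (a b : ℝ) : IsOpen[sorgenfreyTop] (Set.Ico a b) :=
  sOpen_iff.2 (.basic _ ⟨a, b, rfl⟩)

lemma genOpen_iUnion {ι : Sort*} {g : Set (Set ℝ)} {f : ι → Set ℝ}
    (h : ∀ i, TopologicalSpace.GenerateOpen g (f i)) :
    TopologicalSpace.GenerateOpen g (⋃ i, f i) := by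
  rw [← Set.sUnion_range]
  exact .sUnion _ (by rintro _ ⟨i, rfl⟩; exact h i)

lemma genOpen_union {g : Set (Set ℝ)} {A B : Set ℝ}
    (hA : TopologicalSpace.GenerateOpen g A) (hB : TopologicalSpace.GenerateOpen g B) :
    TopologicalSpace.GenerateOpen g (A ∪ B) := by
  rw [Set.union_eq_iUnion]
  exact genOpen_iUnion (fun b => by cases b <;> simpa)

lemma genOpen_sub {U : Set ℝ}
    (hU : TopologicalSpace.GenerateOpen {s : Set ℝ | ∃ a b : ℝ, s = Set.Ico a b} U) :
    ∀ x ∈ U, ∃ b, x < b ∧ Set.Ico x b ⊆ U := by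
  induction hU with
  | basic s hs =>
      obtain ⟨a, b, rfl⟩ := hs
      intro x hx
      exact ⟨b, hx.2, fun y hy => ⟨le_trans hx.1 hy.1, hy.2⟩⟩
  | univ => intro x _; exact ⟨x+1, by linarith, fun y _ => trivial⟩
  | inter s t _ _ ihs iht =>
      intro x hx
      obtain ⟨b1, hb1, hs1⟩ := ihs x hx.1
      obtain ⟨b2, hb2, hs2⟩ := iht x hx.2
      refine ⟨min b1 b2, lt_min hb1 hb2, fun y hy => ?_⟩
      exact ⟨hs1 ⟨hy.1, lt_of_lt_of_le hy.2 (min_le_left _ _)⟩,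
        hs2 ⟨hy.1, lt_of_lt_of_le hy.2 (min_le_right _ _)⟩⟩
  | sUnion S _ ih =>
      rintro x ⟨s, hsS, hxs⟩
      obtain ⟨b, hb, hsub⟩ := ih s hsS x hxs
      exact ⟨b, hb, hsub.trans (Set.subset_sUnion_of_mem hsS)⟩

lemma mem_nhds_sorg {x : ℝ} {s : Set ℝ} :
    s ∈ @nhds ℝ sorgenfreyTop x ↔ ∃ b, x < b ∧ Set.Ico x b ⊆ s := by
  constructor
  · intro hs
    obtain ⟨t, hts, hto, hxt⟩ := (@mem_nhds_iff ℝ sorgenfreyTop x s).1 hs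
    obtain ⟨b, hb, hsub⟩ := genOpen_sub (sOpen_iff.1 hto) x hxt
    exact ⟨b, hb, hsub.trans hts⟩
  · rintro ⟨b, hb, hsub⟩
    refine Filter.mem_of_superset ?_ hsub
    exact @IsOpen.mem_nhds ℝ sorgenfreyTop x _ (sOpen_Ico x b) ⟨le_refl x, hb⟩

/-! ### every branch is a base branch at its fruit -/

lemma cut_open (q : ℕ → ℕ) (m : ℕ) :
    IsOpen[sorgenfreyTop] (cut Vs q m ∪ {xq q}) := by
  cases m with
  | zero =>
      rw [cut_zero]
      have heq : (Set.Ioo (xq q) (RR q 1) ∪ ⋃ c, ⋃ (_ : q 0 < c), Vs [c]) ∪ {xq q}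
          = Set.Ico (xq q) (RR q 1) ∪ ⋃ c, ⋃ (_ : q 0 < c), Vs [c] := by
        rw [Set.union_right_comm, Set.Ioo_union_left (xq_lt_RR q 0)]
      rw [heq]
      refine sOpen_iff.2 (genOpen_union (.basic _ ⟨_, _, rfl⟩) ?_)
      refine genOpen_iUnion fun c => genOpen_iUnion fun _ => ?_
      rw [Vs_single]
      exact .basic _ ⟨_, _, rfl⟩
  | succ k =>
      rw [cut_succ, Set.Ioo_union_left (xq_lt_RR q k)]
      exact sOpen_Ico _ _

lemma isBaseBranch (q : ℕ → ℕ) : IsBaseBranch sorgenfreyTop Vs q (xq q) := by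
  refine ⟨xq_mem_fruit q, cut_open q, ?_⟩
  rw [Filter.hasBasis_iff]
  intro s
  constructor
  · intro hs
    obtain ⟨b, hb, hsub⟩ := mem_nhds_sorg.1 hs
    obtain ⟨k, hk⟩ : ∃ k, 2 * (2:ℝ)⁻¹ ^ k < b - xq q := by
      obtain ⟨k, hk⟩ := exists_pow_lt_of_lt_one (x := (b - xq q)/2)
        (by linarith) (by norm_num : (2:ℝ)⁻¹ < 1)
      exact ⟨k, by linarith⟩
    refine ⟨k+1, trivial, ?_⟩
    have hR : RR q (k+1) ≤ b := by
      have h1 := RR_diff q k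
      have h2 := LL_le_xq q k
      have h3 : (2:ℝ)⁻¹ ^ (k+1) ≤ (2:ℝ)⁻¹ ^ k :=
        pow_le_pow_of_le_one (by norm_num) (by norm_num) (Nat.le_succ k)
      linarith
    rw [cut_succ, Set.Ioo_union_left (xq_lt_RR q k)]
    intro y hy
    exact hsub ⟨hy.1, lt_of_lt_of_le hy.2 hR⟩
  · rintro ⟨m, -, hsub⟩
    refine Filter.mem_of_superset ?_ hsub
    refine @IsOpen.mem_nhds ℝ sorgenfreyTop (xq q) _ (cut_open q m) ?_
    exact Set.mem_union_right _ rfl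

end S7

/-- There is a locally strict Sorgenfrey base with strict branches for the
Sorgenfrey line. -/
theorem stmt7 :
    ∃ V : List ℕ → Set ℝ, IsSorgenfreyBase sorgenfreyTop V ∧
      LocallyStrict V ∧ StrictBranches V := by
  open S7 in
  refine ⟨Vs, ⟨?_, ?_, ?_, ?_, ?_⟩, ⟨Vs_cover, fun a m k h => Vs_disjoint a h⟩,
    fun q => ⟨xq q, fruit_eq q⟩⟩
  · intro a
    rcases eq_or_ne a [] with rfl | ha
    · rw [Vs_nil]
      exact sOpen_iff.2 .univ
    · rw [Vs_ne ha]
      exact sOpen_Ico _ _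
  · exact fun q => ⟨xq q, xq_mem_fruit q⟩
  · exact ⟨Vs_nil, Vs_cover⟩
  · intro x q hq n
    have hx : x = xq q := fruit_subset q hq
    refine ⟨q, ?_, rfl⟩
    rw [hx]
    exact isBaseBranch q
  · exact fun q => ⟨xq q, isBaseBranch q⟩
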